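/- A topological space X is Q*-normal if and only if for any two disjoint Q*-closed sets H and K there exist disjoint Q*g-open sets U and V with H ⊆ U and K ⊆ V. -/
import Mathlib


open Set Topology

def QStarClosed {X : Type*} [TopologicalSpace X] (A : Set X) : Prop :=
  IsClosed A ∧ interior A = ∅

def QStarOpen {X : Type*} [TopologicalSpace X] (A : Set X) : Prop :=
  QStarClosed Aᶜ

def GClosed {X : Type*} [TopologicalSpace X] (A : Set X) : Prop :=
  ∀ U : Set X, IsOpen U → A ⊆ U → closure A ⊆ U

def QStarGClosed {X : Type*} [TopologicalSpace X] (A : Set X) : Prop :=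
  ∀ U : Set X, QStarOpen U → A ⊆ U → closure A ⊆ U

def QStarGOpen {X : Type*} [TopologicalSpace X] (A : Set X) : Prop :=
  QStarGClosed Aᶜ

def QStarNormal (X : Type*) [TopologicalSpace X] : Prop :=
  ∀ A B : Set X, QStarClosed A → QStarClosed B → Disjoint A B →
    ∃ U V : Set X, IsOpen U ∧ IsOpen V ∧ A ⊆ U ∧ B ⊆ V ∧ Disjoint U V

def NormalSp (X : Type*) [TopologicalSpace X] : Prop :=
  ∀ A B : Set X, IsClosed A → IsClosed B → Disjoint A B →
    ∃ U V : Set X, IsOpen U ∧ IsOpen V ∧ A ⊆ U ∧ B ⊆ V ∧ Disjoint U V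

def GNormal (X : Type*) [TopologicalSpace X] : Prop :=
  ∀ A B : Set X, GClosed A → GClosed B → Disjoint A B →
    ∃ U V : Set X, IsOpen U ∧ IsOpen V ∧ A ⊆ U ∧ B ⊆ V ∧ Disjoint U V

theorem stmt14 {X : Type*} [TopologicalSpace X] :
    QStarNormal X ↔
      ∀ H K : Set X, QStarClosed H → QStarClosed K → Disjoint H K →
        ∃ U V : Set X, QStarGOpen U ∧ QStarGOpen V ∧ H ⊆ U ∧ K ⊆ V ∧ Disjoint U V := by
  constructor
  · intro h H K hH hK hd
    obtain ⟨U, V, hU, hV, hHU, hKV, hUV⟩ := h H K hH hK hd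
    refine ⟨U, V, ?_, ?_, hHU, hKV, hUV⟩
    · intro W _ hW
      rwa [(hU.isClosed_compl).closure_eq]
    · intro W _ hW
      rwa [(hV.isClosed_compl).closure_eq]
  · intro h H K hH hK hd
    obtain ⟨U, V, hU, hV, hHU, hKV, hUV⟩ := h H K hH hK hd
    refine ⟨interior U, interior V, isOpen_interior, isOpen_interior, ?_, ?_,
      hUV.mono interior_subset interior_subset⟩
    · have h1 : closure Uᶜ ⊆ Hᶜ := hU Hᶜ (by simpa [QStarOpen, compl_compl] using hH) (compl_subset_compl.mpr hHU)
      have := compl_subset_compl.mpr h1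
      rwa [compl_compl, ← interior_compl, compl_compl] at this
    · have h1 : closure Vᶜ ⊆ Kᶜ := hV Kᶜ (by simpa [QStarOpen, compl_compl] using hK) (compl_subset_compl.mpr hKV)
      have := compl_subset_compl.mpr h1
      rwa [compl_compl, ← interior_compl, compl_compl] at this
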